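/- The explicit element ρ of M_N(k) ⊗ M_N(k) defined below satisfies the algebraic Yang–Baxter equation ρ₁₂ρ₁₃ρ₂₃ = ρ₂₃ρ₁₃ρ₁₂ in M_N(k) ⊗ M_N(k) ⊗ M_N(k), where ρᵢⱼ denotes ρ placed in tensor factors i and j with the identity matrix in the remaining factor. -/

import Mathlib

open TensorProduct

/-- The elementary matrix `E^a_b`. -/
noncomputable def Emat (k : Type*) [CommRing k] (N : ℕ) (a b : Fin N) :
    Matrix (Fin N) (Fin N) k :=
  Matrix.single a b 1

/-- `ρ = z Σ_{a>b} E^a_b ⊗ E^b_a + q Σ_a E^a_a ⊗ E^a_a + Σ_{a≠b} E^a_a ⊗ E^b_b`. -/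
noncomputable def rhoElt (k : Type*) [CommRing k] (N : ℕ) (q : kˣ) :
    Matrix (Fin N) (Fin N) k ⊗[k] Matrix (Fin N) (Fin N) k :=
  ((q : k) - ((q⁻¹ : kˣ) : k)) •
      (∑ a : Fin N, ∑ b : Fin N, if b < a then Emat k N a b ⊗ₜ[k] Emat k N b a else 0) +
    (q : k) • (∑ a : Fin N, Emat k N a a ⊗ₜ[k] Emat k N a a) +
    ∑ a : Fin N, ∑ b : Fin N, if a ≠ b then Emat k N a a ⊗ₜ[k] Emat k N b b else 0


namespace YBaux

variable {k : Type*} [CommRing k] {N : ℕ}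



def ff (q z : k) (a b c d : Fin N) : k :=
  (if c = b ∧ d = a ∧ b < a then z else 0) +
    (if c = a ∧ d = b then (if a = b then q else 1) else 0)

theorem sum1 (q z : k) (a b : Fin N) (g : Fin N → Fin N → k) :
    (∑ c : Fin N, ∑ d : Fin N, ff q z a b c d * g c d) =
      (if b < a then z * g b a else 0) + (if a = b then q else 1) * g a b := by
  simp only [ff, add_mul, ite_mul, zero_mul, one_mul, Finset.sum_add_distrib, ite_and]
  simp [Finset.sum_ite_eq, apply_ite (fun r => ite (a = b) (q * r) r)]

theorem sum2 (q z : k) (a b c : Fin N) (g : Fin N → k) :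
    (∑ d : Fin N, ff q z a b c d * g d) =
      (if c = b ∧ b < a then z * g a else 0) +
        (if c = a then (if a = b then q else 1) * g b else 0) := by
  simp only [ff, add_mul, ite_mul, zero_mul, one_mul, Finset.sum_add_distrib, ite_and]
  simp [Finset.sum_ite_eq, apply_ite (fun r => ite (a = b) (q * r) r)]

theorem sum3 (q z : k) (a b d : Fin N) (g : Fin N → k) :
    (∑ c : Fin N, ff q z a b c d * g c) =
      (if d = a ∧ b < a then z * g b else 0) +
        (if d = b then (if a = b then q else 1) * g a else 0) := by
  simp only [ff, add_mul, ite_mul, zero_mul, one_mul, Finset.sum_add_distrib, ite_and]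
  simp [Finset.sum_ite_eq, apply_ite (fun r => ite (a = b) (q * r) r),
    apply_ite (fun r => ite (d = a) (ite (b < a) (z * r) r) r)]

set_option maxHeartbeats 4000000 in
theorem keyYB (q z : k) (hqz : q * z = q ^ 2 - 1) (a1 a2 a3 b1 b2 b3 : Fin N) :
    (∑ y : Fin N, ∑ x : Fin N, ff q z a1 a2 y x *
        (∑ u : Fin N, ff q z y a3 b1 u * ff q z x u b2 b3)) =
      ∑ x : Fin N, ∑ t : Fin N, ff q z a2 a3 x t *
        (∑ v : Fin N, ff q z a1 t v b3 * ff q z v x b1 b2) := by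
  simp only [sum2, sum3, sum1]
  simp only [Finset.sum_add_distrib, ite_and, Finset.sum_ite_eq, Finset.sum_ite_eq',
    Finset.mem_univ, if_true]
  rcases lt_trichotomy a1 a2 with h12 | h12 | h12 <;>
    rcases lt_trichotomy a2 a3 with h23 | h23 | h23 <;>
    rcases lt_trichotomy a1 a3 with h13 | h13 | h13 <;>
    first
    | (exfalso; omega)
    | (first | have e1 : (a2 < a1) = True := eq_true (by omega) | have e1 : (a2 < a1) = False := eq_false (by omega)
       first | have e2 : (a1 < a2) = True := eq_true (by omega) | have e2 : (a1 < a2) = False := eq_false (by omega)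
       first | have e3 : (a3 < a2) = True := eq_true (by omega) | have e3 : (a3 < a2) = False := eq_false (by omega)
       first | have e4 : (a2 < a3) = True := eq_true (by omega) | have e4 : (a2 < a3) = False := eq_false (by omega)
       first | have e5 : (a3 < a1) = True := eq_true (by omega) | have e5 : (a3 < a1) = False := eq_false (by omega)
       first | have e6 : (a1 < a3) = True := eq_true (by omega) | have e6 : (a1 < a3) = False := eq_false (by omega)
       first | have e7 : (a1 = a2) = True := eq_true (by omega) | have e7 : (a1 = a2) = False := eq_false (by omega)
       first | have e8 : (a2 = a1) = True := eq_true (by omega) | have e8 : (a2 = a1) = False := eq_false (by omega)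
       first | have e9 : (a2 = a3) = True := eq_true (by omega) | have e9 : (a2 = a3) = False := eq_false (by omega)
       first | have e10 : (a3 = a2) = True := eq_true (by omega) | have e10 : (a3 = a2) = False := eq_false (by omega)
       first | have e11 : (a1 = a3) = True := eq_true (by omega) | have e11 : (a1 = a3) = False := eq_false (by omega)
       first | have e12 : (a3 = a1) = True := eq_true (by omega) | have e12 : (a3 = a1) = False := eq_false (by omega)
       simp only [ff, e1, e2, e3, e4, e5, e6, e7, e8, e9, e10, e11, e12, if_true, if_false,
         and_true, and_false, true_and, false_and, ite_self, mul_zero, zero_mul, add_zero,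
         zero_add, one_mul, mul_one, lt_self_iff_false, lt_irrefl]
       simp only [ite_and]
       split_ifs <;>
         first
         | (exfalso; omega)
         | ring1
         | linear_combination hqz
         | linear_combination z * hqz
         | linear_combination (-1 : k) * hqz
         | linear_combination (-z) * hqz
         | linear_combination q * hqz
         | linear_combination (-q) * hqz
         | linear_combination (z * z) * hqz
         | linear_combination (-(z * z)) * hqz)

variable {k : Type*} [CommRing k] {N : ℕ}

abbrev MM (k : Type*) [CommRing k] (N : ℕ) := Matrix (Fin N) (Fin N) k

/-- tensor square of matrix algebra to matrices on pairs -/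
noncomputable def T2 (k : Type*) [CommRing k] (N : ℕ) :
    (MM k N ⊗[k] MM k N) ≃ₐ[k] Matrix (Fin N × Fin N) (Fin N × Fin N) k :=
  (matrixEquivTensor (Fin N) k (MM k N)).symm.trans
    (Matrix.compAlgEquiv (Fin N) (Fin N) k k)

theorem T2_tmul (a b : MM k N) (p s : Fin N × Fin N) :
    T2 k N (a ⊗ₜ[k] b) p s = b p.1 s.1 * a p.2 s.2 := by
  simp [T2, matrixEquivTensor_apply_symm, Matrix.compAlgEquiv, Matrix.compRingEquiv,
    Matrix.compAddEquiv, Matrix.comp, Algebra.algebraMap_eq_smul_one]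
  show (a • Matrix.map b (algebraMap k (MM k N))) _ _ _ _ = _
  simp [Algebra.algebraMap_eq_smul_one, mul_comm]

noncomputable def T2' (k : Type*) [CommRing k] (N : ℕ) :
    (MM k N ⊗[k] Matrix (Fin N × Fin N) (Fin N × Fin N) k) ≃ₐ[k]
      Matrix ((Fin N × Fin N) × Fin N) ((Fin N × Fin N) × Fin N) k :=
  (matrixEquivTensor (Fin N × Fin N) k (MM k N)).symm.trans
    (Matrix.compAlgEquiv (Fin N × Fin N) (Fin N) k k)

noncomputable def T3 (k : Type*) [CommRing k] (N : ℕ) :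
    (MM k N ⊗[k] (MM k N ⊗[k] MM k N)) ≃ₐ[k]
      Matrix ((Fin N × Fin N) × Fin N) ((Fin N × Fin N) × Fin N) k :=
  (Algebra.TensorProduct.congr AlgEquiv.refl (T2 k N)).trans (T2' k N)

theorem T2'_tmul (a : MM k N) (D : Matrix (Fin N × Fin N) (Fin N × Fin N) k)
    (p s : (Fin N × Fin N) × Fin N) :
    T2' k N (a ⊗ₜ[k] D) p s = D p.1 s.1 * a p.2 s.2 := by
  simp [T2', matrixEquivTensor_apply_symm, Matrix.compAlgEquiv, Matrix.compRingEquiv,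
    Matrix.compAddEquiv, Matrix.comp, Algebra.algebraMap_eq_smul_one]
  show (a • Matrix.map D (algebraMap k (MM k N))) _ _ _ _ = _
  simp [Algebra.algebraMap_eq_smul_one, mul_comm]

theorem T3_tmul (a b c : MM k N) (p s : (Fin N × Fin N) × Fin N) :
    T3 k N (a ⊗ₜ[k] (b ⊗ₜ[k] c)) p s = c p.1.1 s.1.1 * b p.1.2 s.1.2 * a p.2 s.2 := by
  rw [T3, AlgEquiv.trans_apply, Algebra.TensorProduct.congr_apply]
  simp only [Algebra.TensorProduct.map_tmul, AlgHom.coe_id, id_eq, AlgEquiv.toAlgHom_eq_coe,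
    AlgHom.coe_coe]
  rw [T2'_tmul]
  erw [T2_tmul, AlgEquiv.coe_refl, id_eq]


theorem rho_eq (q : kˣ) :
    rhoElt k N q = ∑ r1 : Fin N, ∑ r2 : Fin N, ∑ c1 : Fin N, ∑ c2 : Fin N,
      ff (q : k) ((q : k) - ((q⁻¹ : kˣ) : k)) r1 r2 c1 c2 •
        (Emat k N r1 c1 ⊗ₜ[k] Emat k N r2 c2) := by
  simp only [ff, add_smul, ite_smul, zero_smul, one_smul, Finset.sum_add_distrib, ite_and]
  simp only [Finset.sum_ite_irrel, Finset.sum_const_zero, Finset.sum_ite_eq,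
    Finset.sum_ite_eq', Finset.mem_univ, if_true]
  rw [rhoElt]
  have hsplit : ∀ x x1 : Fin N,
      (if x = x1 then (q : k) • (Emat k N x x ⊗ₜ[k] Emat k N x1 x1)
        else Emat k N x x ⊗ₜ[k] Emat k N x1 x1)
      = (if x = x1 then (q : k) • (Emat k N x x ⊗ₜ[k] Emat k N x1 x1) else 0) +
        (if x ≠ x1 then Emat k N x x ⊗ₜ[k] Emat k N x1 x1 else 0) := by
    intro x x1; by_cases h : x = x1 <;> simp [h]
  simp only [hsplit, Finset.sum_add_distrib, Finset.smul_sum, smul_ite, smul_zero,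
    Finset.sum_ite_eq, Finset.mem_univ, if_true]
  abel

set_option synthInstance.maxHeartbeats 400000 in
theorem img12 (q : kˣ) :
    T3 k N (Algebra.TensorProduct.map (AlgHom.id k (MM k N))
      (Algebra.TensorProduct.includeLeft : MM k N →ₐ[k] MM k N ⊗[k] MM k N) (rhoElt k N q)) =
    Matrix.of fun p s : (Fin N × Fin N) × Fin N =>
      (if p.1.1 = s.1.1 then 1 else 0) *
        ff (q : k) ((q : k) - ((q⁻¹ : kˣ) : k)) p.2 p.1.2 s.2 s.1.2 := by
  ext p s
  simp only [rho_eq, map_sum, map_smul, Algebra.TensorProduct.map_tmul,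
    Algebra.TensorProduct.includeLeft_apply, AlgHom.coe_id, id_eq,
    Matrix.sum_apply, Matrix.smul_apply, T3_tmul, Matrix.of_apply, smul_eq_mul,
    Emat, Matrix.single, Matrix.one_apply, ite_and, mul_ite, mul_one, mul_zero,
    ite_mul, one_mul, zero_mul, Finset.sum_ite_irrel, Finset.sum_const_zero,
    Finset.sum_ite_eq, Finset.sum_ite_eq', Finset.mem_univ, if_true]

set_option synthInstance.maxHeartbeats 400000 in
theorem img13 (q : kˣ) :
    T3 k N (Algebra.TensorProduct.map (AlgHom.id k (MM k N))
      (Algebra.TensorProduct.includeRight : MM k N →ₐ[k] MM k N ⊗[k] MM k N) (rhoElt k N q)) =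
    Matrix.of fun p s : (Fin N × Fin N) × Fin N =>
      (if p.1.2 = s.1.2 then 1 else 0) *
        ff (q : k) ((q : k) - ((q⁻¹ : kˣ) : k)) p.2 p.1.1 s.2 s.1.1 := by
  ext p s
  simp only [rho_eq, map_sum, map_smul, Algebra.TensorProduct.map_tmul,
    Algebra.TensorProduct.includeRight_apply, AlgHom.coe_id, id_eq,
    Matrix.sum_apply, Matrix.smul_apply, T3_tmul, Matrix.of_apply, smul_eq_mul,
    Emat, Matrix.single, Matrix.one_apply, ite_and, mul_ite, mul_one, mul_zero,
    ite_mul, one_mul, zero_mul, Finset.sum_ite_irrel, Finset.sum_const_zero,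
    Finset.sum_ite_eq, Finset.sum_ite_eq', Finset.mem_univ, if_true]

set_option synthInstance.maxHeartbeats 400000 in
theorem img23 (q : kˣ) :
    T3 k N ((Algebra.TensorProduct.includeRight :
        (MM k N ⊗[k] MM k N) →ₐ[k] MM k N ⊗[k] (MM k N ⊗[k] MM k N)) (rhoElt k N q)) =
    Matrix.of fun p s : (Fin N × Fin N) × Fin N =>
      (if p.2 = s.2 then 1 else 0) *
        ff (q : k) ((q : k) - ((q⁻¹ : kˣ) : k)) p.1.2 p.1.1 s.1.2 s.1.1 := by
  ext p s
  simp only [rho_eq, map_sum, map_smul,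
    Algebra.TensorProduct.includeRight_apply,
    Matrix.sum_apply, Matrix.smul_apply, T3_tmul, Matrix.of_apply, smul_eq_mul,
    Emat, Matrix.single, Matrix.one_apply, ite_and, mul_ite, mul_one, mul_zero,
    ite_mul, one_mul, zero_mul, Finset.sum_ite_irrel, Finset.sum_const_zero,
    Finset.sum_ite_eq, Finset.sum_ite_eq', Finset.mem_univ, if_true]

theorem swap23 (g : Fin N → Fin N → Fin N → k) :
    (∑ a : Fin N, ∑ b : Fin N, ∑ c : Fin N, g a b c) =
      ∑ a : Fin N, ∑ c : Fin N, ∑ b : Fin N, g a b c :=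
  Finset.sum_congr rfl fun _ _ => Finset.sum_comm

theorem rev3 (g : Fin N → Fin N → Fin N → k) :
    (∑ a : Fin N, ∑ b : Fin N, ∑ c : Fin N, g a b c) =
      ∑ c : Fin N, ∑ b : Fin N, ∑ a : Fin N, g a b c := by
  rw [Finset.sum_comm]
  rw [show (∑ b : Fin N, ∑ a : Fin N, ∑ c : Fin N, g a b c) =
      ∑ b : Fin N, ∑ c : Fin N, ∑ a : Fin N, g a b c from
    Finset.sum_congr rfl fun _ _ => Finset.sum_comm]
  rw [Finset.sum_comm]

theorem matYB (q z : k) (hqz : q * z = q ^ 2 - 1) :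
    ((Matrix.of fun p s : (Fin N × Fin N) × Fin N =>
        (if p.1.1 = s.1.1 then 1 else 0) * ff q z p.2 p.1.2 s.2 s.1.2) *
      (Matrix.of fun p s : (Fin N × Fin N) × Fin N =>
        (if p.1.2 = s.1.2 then 1 else 0) * ff q z p.2 p.1.1 s.2 s.1.1) *
      (Matrix.of fun p s : (Fin N × Fin N) × Fin N =>
        (if p.2 = s.2 then 1 else 0) * ff q z p.1.2 p.1.1 s.1.2 s.1.1)) =
    ((Matrix.of fun p s : (Fin N × Fin N) × Fin N =>
        (if p.2 = s.2 then 1 else 0) * ff q z p.1.2 p.1.1 s.1.2 s.1.1) *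
      (Matrix.of fun p s : (Fin N × Fin N) × Fin N =>
        (if p.1.2 = s.1.2 then 1 else 0) * ff q z p.2 p.1.1 s.2 s.1.1) *
      (Matrix.of fun p s : (Fin N × Fin N) × Fin N =>
        (if p.1.1 = s.1.1 then 1 else 0) * ff q z p.2 p.1.2 s.2 s.1.2)) := by
  ext p s
  simp only [Matrix.mul_apply, Matrix.of_apply, Fintype.sum_prod_type,
    Finset.sum_mul, Finset.mul_sum, ite_mul, one_mul, zero_mul, mul_ite, mul_one, mul_zero,
    Finset.sum_ite_irrel, Finset.sum_const_zero, Finset.sum_ite_eq, Finset.sum_ite_eq',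
    Finset.mem_univ, if_true]
  have h := keyYB q z hqz p.2 p.1.2 p.1.1 s.2 s.1.2 s.1.1
  simp only [Finset.mul_sum] at h
  conv_lhs => rw [rev3]
  conv_rhs => rw [swap23]
  simp only [mul_assoc]
  exact h

set_option synthInstance.maxHeartbeats 1000000 in
theorem main (k : Type*) [CommRing k] (N : ℕ) (q : kˣ) :
    Algebra.TensorProduct.map (AlgHom.id k (Matrix (Fin N) (Fin N) k))
        (Algebra.TensorProduct.includeLeft :
          Matrix (Fin N) (Fin N) k →ₐ[k] Matrix (Fin N) (Fin N) k ⊗[k] Matrix (Fin N) (Fin N) k)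
        (rhoElt k N q) *
      Algebra.TensorProduct.map (AlgHom.id k (Matrix (Fin N) (Fin N) k))
        (Algebra.TensorProduct.includeRight :
          Matrix (Fin N) (Fin N) k →ₐ[k] Matrix (Fin N) (Fin N) k ⊗[k] Matrix (Fin N) (Fin N) k)
        (rhoElt k N q) *
      (Algebra.TensorProduct.includeRight :
          (Matrix (Fin N) (Fin N) k ⊗[k] Matrix (Fin N) (Fin N) k) →ₐ[k]
            Matrix (Fin N) (Fin N) k ⊗[k]
              (Matrix (Fin N) (Fin N) k ⊗[k] Matrix (Fin N) (Fin N) k))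
        (rhoElt k N q) =
    (Algebra.TensorProduct.includeRight :
          (Matrix (Fin N) (Fin N) k ⊗[k] Matrix (Fin N) (Fin N) k) →ₐ[k]
            Matrix (Fin N) (Fin N) k ⊗[k]
              (Matrix (Fin N) (Fin N) k ⊗[k] Matrix (Fin N) (Fin N) k))
        (rhoElt k N q) *
      Algebra.TensorProduct.map (AlgHom.id k (Matrix (Fin N) (Fin N) k))
        (Algebra.TensorProduct.includeRight :
          Matrix (Fin N) (Fin N) k →ₐ[k] Matrix (Fin N) (Fin N) k ⊗[k] Matrix (Fin N) (Fin N) k)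
        (rhoElt k N q) *
      Algebra.TensorProduct.map (AlgHom.id k (Matrix (Fin N) (Fin N) k))
        (Algebra.TensorProduct.includeLeft :
          Matrix (Fin N) (Fin N) k →ₐ[k] Matrix (Fin N) (Fin N) k ⊗[k] Matrix (Fin N) (Fin N) k)
        (rhoElt k N q) := by
  apply (YBaux.T3 k N).injective
  simp only [map_mul]
  rw [YBaux.img12 q, YBaux.img13 q, YBaux.img23 q]
  exact YBaux.matYB _ _ (by rw [mul_sub, Units.mul_inv]; ring)

end YBaux

/-- `ρ` satisfies the algebraic Yang–Baxter equation
`ρ₁₂ρ₁₃ρ₂₃ = ρ₂₃ρ₁₃ρ₁₂` in `M_N(k) ⊗ M_N(k) ⊗ M_N(k)`. -/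
theorem statement6 (k : Type*) [CommRing k] (N : ℕ) (hN : 0 < N) (q : kˣ) :
    Algebra.TensorProduct.map (AlgHom.id k (Matrix (Fin N) (Fin N) k))
        (Algebra.TensorProduct.includeLeft :
          Matrix (Fin N) (Fin N) k →ₐ[k] Matrix (Fin N) (Fin N) k ⊗[k] Matrix (Fin N) (Fin N) k)
        (rhoElt k N q) *
      Algebra.TensorProduct.map (AlgHom.id k (Matrix (Fin N) (Fin N) k))
        (Algebra.TensorProduct.includeRight :
          Matrix (Fin N) (Fin N) k →ₐ[k] Matrix (Fin N) (Fin N) k ⊗[k] Matrix (Fin N) (Fin N) k)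
        (rhoElt k N q) *
      (Algebra.TensorProduct.includeRight :
          (Matrix (Fin N) (Fin N) k ⊗[k] Matrix (Fin N) (Fin N) k) →ₐ[k]
            Matrix (Fin N) (Fin N) k ⊗[k]
              (Matrix (Fin N) (Fin N) k ⊗[k] Matrix (Fin N) (Fin N) k))
        (rhoElt k N q) =
    (Algebra.TensorProduct.includeRight :
          (Matrix (Fin N) (Fin N) k ⊗[k] Matrix (Fin N) (Fin N) k) →ₐ[k]
            Matrix (Fin N) (Fin N) k ⊗[k]
              (Matrix (Fin N) (Fin N) k ⊗[k] Matrix (Fin N) (Fin N) k))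
        (rhoElt k N q) *
      Algebra.TensorProduct.map (AlgHom.id k (Matrix (Fin N) (Fin N) k))
        (Algebra.TensorProduct.includeRight :
          Matrix (Fin N) (Fin N) k →ₐ[k] Matrix (Fin N) (Fin N) k ⊗[k] Matrix (Fin N) (Fin N) k)
        (rhoElt k N q) *
      Algebra.TensorProduct.map (AlgHom.id k (Matrix (Fin N) (Fin N) k))
        (Algebra.TensorProduct.includeLeft :
          Matrix (Fin N) (Fin N) k →ₐ[k] Matrix (Fin N) (Fin N) k ⊗[k] Matrix (Fin N) (Fin N) k)
        (rhoElt k N q) := by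
  exact YBaux.main k N q
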